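/- Let θ be an infinite regular cardinal and κ a cardinal with cf(κ) ≠ θ. Suppose there exists a sequence ⟨g_β : β < κ⟩ in θ^θ such that for every cofinal B ⊆ κ, {g_β : β ∈ B} is unbounded in (θ^θ, <*). Then 𝔟_θ ≤ cf(κ) ≤ 𝔡_θ. -/

import Mathlib

open Cardinal Ordinal Set

/-- `f` is a function from `θ` to `θ` (as a function on ordinals). -/
def intoFun (θ : Cardinal) (f : Ordinal → Ordinal) : Prop :=
  ∀ τ < θ.ord, f τ < θ.ord

/-- `f <* g`: eventual domination below `θ`. -/
def evLt (θ : Cardinal) (f g : Ordinal → Ordinal) : Prop :=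
  ∃ ε < θ.ord, ∀ τ : Ordinal, ε ≤ τ → τ < θ.ord → f τ < g τ

/-- The bounding number `𝔟_θ` of `(θ^θ, <*)`. -/
noncomputable def bNum (θ : Cardinal) : Cardinal :=
  sInf { c : Cardinal | ∃ o : Ordinal, o.card = c ∧
    ∃ F : Ordinal → Ordinal → Ordinal,
      (∀ i < o, intoFun θ (F i)) ∧
      ¬ ∃ g : Ordinal → Ordinal, intoFun θ g ∧ ∀ i < o, evLt θ (F i) g }

/-- The dominating number `𝔡_θ` of `(θ^θ, <*)`. -/
noncomputable def dNum (θ : Cardinal) : Cardinal :=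
  sInf { c : Cardinal | ∃ o : Ordinal, o.card = c ∧
    ∃ F : Ordinal → Ordinal → Ordinal,
      (∀ i < o, intoFun θ (F i)) ∧
      ∀ g : Ordinal → Ordinal, intoFun θ g → ∃ i < o, evLt θ g (F i) }

theorem stmt_9 (θ κ : Cardinal) (hθ : ℵ₀ ≤ θ) (hθreg : θ.IsRegular)
    (hcf : (κ.ord).cof ≠ θ)
    (g : Ordinal → Ordinal → Ordinal)
    (hg : ∀ β < κ.ord, intoFun θ (g β))
    (hub : ∀ B : Set Ordinal, B ⊆ Set.Iio κ.ord →
      (∀ α < κ.ord, ∃ β ∈ B, α ≤ β) →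
      ¬ ∃ h : Ordinal → Ordinal, intoFun θ h ∧ ∀ β ∈ B, evLt θ (g β) h) :
    bNum θ ≤ (κ.ord).cof ∧ (κ.ord).cof ≤ dNum θ := by
  constructor
  · -- bNum θ ≤ cof
    obtain ⟨f, hf⟩ := Ordinal.exists_fundamental_sequence κ.ord
    refine csInf_le (OrderBot.bddBelow _) ?_
    refine ⟨(κ.ord).cof.ord, Cardinal.card_ord _,
      fun i => if h : i < (κ.ord).cof.ord then g (f i h) else 0, ?_, ?_⟩
    · intro i hi
      simp only [dif_pos hi]
      exact hg _ (hf.lt hi)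
    · rintro ⟨h, hinto, hdom⟩
      refine hub {β | ∃ i, ∃ hi : i < (κ.ord).cof.ord, f i hi = β} ?_ ?_ ⟨h, hinto, ?_⟩
      · rintro β ⟨i, hi, rfl⟩
        exact hf.lt hi
      · intro α hα
        rw [← hf.blsub_eq] at hα
        obtain ⟨i, hi, hle⟩ := Ordinal.lt_blsub_iff.mp hα
        exact ⟨f i hi, ⟨i, hi, rfl⟩, hle⟩
      · rintro β ⟨i, hi, rfl⟩
        simpa only [dif_pos hi] using hdom i hi
  · -- cof ≤ dNum
    have hlim : Order.IsSuccLimit θ.ord := Cardinal.isSuccLimit_ord hθ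
    refine le_csInf ?_ ?_
    · -- the dominating set is nonempty: all functions
      obtain ⟨r, wo, hr⟩ := Cardinal.exists_ord_eq ((θ.ord).ToType → (θ.ord).ToType)
      let e := (Ordinal.ToType.mk (o := θ.ord))
      refine ⟨(Ordinal.type r).card, Ordinal.type r, rfl, fun i τ =>
        if h : i < Ordinal.type r then
          (if hτ : τ < θ.ord then
            ((e.symm ((Ordinal.enum r ⟨i, h⟩) (e ⟨τ, hτ⟩)) : Set.Iio θ.ord) : Ordinal) + 1
          else 0)
        else 0, ?_, ?_⟩
      · intro i hi τ hτ
        simp only [dif_pos hi, dif_pos hτ]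
        exact hlim.succ_lt (e.symm _).2
      · intro G hG
        set Gs : (θ.ord).ToType → (θ.ord).ToType :=
          fun x => e ⟨G ((e.symm x : Set.Iio θ.ord) : Ordinal), hG _ (e.symm x).2⟩ with hGs
        refine ⟨Ordinal.typein r Gs, Ordinal.typein_lt_type r Gs, 0, hlim.pos, fun τ _ hτ => ?_⟩
        simp only [dif_pos (Ordinal.typein_lt_type r Gs), dif_pos hτ, Ordinal.enum_typein, hGs,
          OrderIso.symm_apply_apply]
        split_ifs with hc
        · exact lt_add_one (G τ)
        · exact absurd (Ordinal.typein_lt_type r Gs) hc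
    · rintro c ⟨o, rfl, F, hFinto, hFdom⟩
      by_contra hlt
      push_neg at hlt
      have choice : ∀ β < κ.ord, ∃ i < o, evLt θ (g β) (F i) := fun β hβ => hFdom _ (hg β hβ)
      choose! idx hidx hevm using choice
      by_cases hfib : ∃ i₀ < o, ∀ α < κ.ord, ∃ β, (β < κ.ord ∧ idx β = i₀) ∧ α ≤ β
      · obtain ⟨i₀, hi₀, hcof⟩ := hfib
        exact hub {β | β < κ.ord ∧ idx β = i₀} (fun β hβ => hβ.1) hcof
          ⟨F i₀, hFinto i₀ hi₀, fun β hβ => hβ.2 ▸ hevm β hβ.1⟩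
      · push_neg at hfib
        have hbound : ∀ i < o, ∃ α < κ.ord, ∀ β < κ.ord, idx β = i → β < α := by
          intro i hi
          obtain ⟨α, hα, hβ⟩ := hfib i hi
          exact ⟨α, hα, fun β hβκ hβi => by
            by_contra hc
            push_neg at hc
            exact absurd ⟨hβκ, hβi⟩ (fun h => (hβ β h).not_ge hc)⟩
        choose! bnd hbnd hbnd2 using hbound
        have hsup : Ordinal.bsup o (fun i _ => bnd i) < κ.ord :=
          Ordinal.bsup_lt_ord hlt (fun i hi => hbnd i hi)
        have h1 : idx (Ordinal.bsup o (fun i _ => bnd i)) < o := hidx _ hsup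
        have h2 : Ordinal.bsup o (fun i _ => bnd i) < bnd (idx (Ordinal.bsup o (fun i _ => bnd i))) :=
          hbnd2 _ h1 _ hsup rfl
        exact h2.not_ge (Ordinal.le_bsup (fun i _ => bnd i) _ h1)
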